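/- There exists a finite simple graph N that is triangle-free and admits a proper 3-coloring, together with two distinct non-adjacent vertices u and v of N, such that every proper 3-coloring c of N satisfies c(u) ≠ c(v). -/

import Mathlib

/-- Edge list of the inequality gadget: the Grötzsch graph (outer 5-cycle `0..4`,
inner vertices `5..9`, hub `10`) with the edge `01` deleted and a pendant vertex `11`
attached to `1`. -/
def gedges : List (Fin 12 × Fin 12) :=
  [(1,2),(2,3),(3,4),(4,0),(5,1),(5,4),(6,2),(6,0),(7,3),(7,1),(8,4),(8,2),
   (9,0),(9,3),(10,5),(10,6),(10,7),(10,8),(10,9),(1,11)]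

def G : SimpleGraph (Fin 12) where
  Adj a b := (a,b) ∈ gedges ∨ (b,a) ∈ gedges
  symm := ⟨by intro a b h; exact h.symm⟩
  loopless := ⟨by intro a; revert a; decide⟩

instance : DecidableRel G.Adj := fun a b => by unfold G; infer_instance

def gc : Fin 12 → Fin 3 := ![0,0,1,0,1,2,2,1,2,1,0,1]

theorem gcvalid : ∀ a b, G.Adj a b → gc a ≠ gc b := by decide

theorem tfree : G.CliqueFree 3 := by
  intro t ht
  obtain ⟨a, b, c, hab, hac, hbc, -⟩ := SimpleGraph.is3Clique_iff.1 ht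
  revert hab hac hbc
  revert a b c
  decide

set_option maxRecDepth 10000 in
set_option synthInstance.maxSize 2000 in
set_option synthInstance.maxHeartbeats 1000000 in
/-- Core finite check: no proper 3-coloring of the gadget (inner vertices projected
out as existentials) assigns equal colors to the pendant vertex and vertex `0`. -/
theorem key2 : ∀ c0 c1 c2 c3 c4 c10 c11 : Fin 3,
    c1 ≠ c2 → c2 ≠ c3 → c3 ≠ c4 → c4 ≠ c0 → c1 ≠ c11 →
    (∃ x : Fin 3, x ≠ c1 ∧ x ≠ c4 ∧ x ≠ c10) →
    (∃ x : Fin 3, x ≠ c2 ∧ x ≠ c0 ∧ x ≠ c10) →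
    (∃ x : Fin 3, x ≠ c3 ∧ x ≠ c1 ∧ x ≠ c10) →
    (∃ x : Fin 3, x ≠ c4 ∧ x ≠ c2 ∧ x ≠ c10) →
    (∃ x : Fin 3, x ≠ c0 ∧ x ≠ c3 ∧ x ≠ c10) → c11 ≠ c0 := by decide

/-- **Inequality gadget.** There exists a finite simple graph `N` that is triangle-free
and admits a proper 3-coloring, together with two distinct non-adjacent vertices
`u` and `v`, such that every proper 3-coloring `c` of `N` satisfies `c u ≠ c v`. -/
theorem inequality_gadget_exists :
    ∃ (W : Type) (_ : Fintype W) (N : SimpleGraph W) (u v : W),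
      N.CliqueFree 3 ∧ N.Colorable 3 ∧ u ≠ v ∧ ¬ N.Adj u v ∧
      ∀ c : N.Coloring (Fin 3), c u ≠ c v := by
  refine ⟨Fin 12, inferInstance, G, 11, 0, tfree,
    ⟨SimpleGraph.Coloring.mk gc fun h => gcvalid _ _ h⟩, by decide, by decide, ?_⟩
  intro c
  have v : ∀ a b : Fin 12, G.Adj a b → c a ≠ c b := fun a b h => c.valid h
  exact key2 (c 0) (c 1) (c 2) (c 3) (c 4) (c 10) (c 11)
    (v 1 2 (by decide)) (v 2 3 (by decide)) (v 3 4 (by decide)) (v 4 0 (by decide))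
    (v 1 11 (by decide))
    ⟨c 5, v 5 1 (by decide), v 5 4 (by decide), v 5 10 (by decide)⟩
    ⟨c 6, v 6 2 (by decide), v 6 0 (by decide), v 6 10 (by decide)⟩
    ⟨c 7, v 7 3 (by decide), v 7 1 (by decide), v 7 10 (by decide)⟩
    ⟨c 8, v 8 4 (by decide), v 8 2 (by decide), v 8 10 (by decide)⟩
    ⟨c 9, v 9 0 (by decide), v 9 3 (by decide), v 9 10 (by decide)⟩
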